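/- Let n, m, r be natural numbers with m < n and r + n + 1 ≤ 2m. Let γ, δ be partial functions from Fin n to Fin n with r + 1 ≤ rank(γ) ≤ m and r + 1 ≤ rank(δ) ≤ m, and rank(γ·δ) = r. Then there exist partial functions α, β from Fin n to Fin n, each of rank r + 1, such that α·β = γ·δ and, in the free semigroup on the alphabet X = {μ ∈ PT_n : r + 1 ≤ rank(μ) ≤ m}, the pair (x_γ·x_δ, x_α·x_β) lies in the congruence generated by R = {(x_μ·x_ν, x_{μν}) : r + 1 ≤ rank(μ), rank(ν), rank(μ·ν) ≤ m}. -/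

import Mathlib

/-- The partial transformation monoid on `Fin n`: all partial functions from `Fin n`
to `Fin n`, with `α * β` meaning "first apply `α`, then `β`". -/
def PTn (n : ℕ) : Type := PFun (Fin n) (Fin n)

/-- The underlying partial function of a partial transformation. -/
def PTn.toPFun {n : ℕ} (f : PTn n) : PFun (Fin n) (Fin n) := f

instance (n : ℕ) : Semigroup (PTn n) where
  mul f g := (g.toPFun.comp f.toPFun : PFun (Fin n) (Fin n))
  mul_assoc _ _ _ := (PFun.comp_assoc _ _ _).symm

/-- The rank of a partial transformation: the cardinality of its image. -/
noncomputable def ptrank {n : ℕ} (f : PTn n) : ℕ := Set.ncard f.toPFun.ran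

theorem ptrank_mul_le {n : ℕ} (f g : PTn n) : ptrank (f * g) ≤ ptrank g := by
  apply Set.ncard_le_ncard _ (Set.toFinite _)
  intro y hy
  obtain ⟨x, hx⟩ := hy
  rw [show (f * g).toPFun x = (f.toPFun x).bind g.toPFun from rfl] at hx
  obtain ⟨z, _, hz⟩ := Part.mem_bind_iff.1 hx
  exact ⟨z, hz⟩

/-- The ideal `I_m` of the partial transformation monoid: all partial maps of rank at
most `m`, as a subsemigroup. -/
def PTideal (n m : ℕ) : Subsemigroup (PTn n) where
  carrier := {a | ptrank a ≤ m}
  mul_mem' := fun {a b} _ hb => le_trans (ptrank_mul_le a b) hb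

/-- The alphabet `X_{i,m}`: partial transformations `a` with `i ≤ rank a ≤ m`. -/
abbrev PTX (n m i : ℕ) : Type := {a : PTn n // i ≤ ptrank a ∧ ptrank a ≤ m}

/-- The relations `R_{i,m}` of the restricted Cayley table presentation. -/
def PTRel (n m i : ℕ) : FreeSemigroup (PTX n m i) → FreeSemigroup (PTX n m i) → Prop :=
  fun u v =>
    ∃ (a b : PTn n) (ha : i ≤ ptrank a ∧ ptrank a ≤ m)
      (hb : i ≤ ptrank b ∧ ptrank b ≤ m) (hab : i ≤ ptrank (a * b) ∧ ptrank (a * b) ≤ m),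
      u = FreeSemigroup.of (⟨a, ha⟩ : PTX n m i) * FreeSemigroup.of (⟨b, hb⟩ : PTX n m i) ∧
      v = FreeSemigroup.of (⟨a * b, hab⟩ : PTX n m i)

section Helpers

open Set Part

variable {n : ℕ}

lemma PTn.mul_apply (f g : PTn n) (x : Fin n) :
    (f * g).toPFun x = (f.toPFun x).bind g.toPFun := rfl

lemma PTn.mem_ran {f : PTn n} {y : Fin n} :
    y ∈ f.toPFun.ran ↔ ∃ x, y ∈ f.toPFun x := Iff.rfl

lemma PTn.mem_ran_mul {f g : PTn n} {y : Fin n} :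
    y ∈ (f * g).toPFun.ran ↔ ∃ z ∈ f.toPFun.ran, y ∈ g.toPFun z := by
  constructor
  · rintro ⟨x, hx⟩
    rw [PTn.mul_apply] at hx
    obtain ⟨z, hz, hy⟩ := Part.mem_bind_iff.1 hx
    exact ⟨z, ⟨x, hz⟩, hy⟩
  · rintro ⟨z, ⟨x, hz⟩, hy⟩
    exact ⟨x, (PTn.mul_apply f g x) ▸ Part.mem_bind_iff.2 ⟨z, hz, hy⟩⟩

lemma PTn.ran_mul_subset (f g : PTn n) : (f * g).toPFun.ran ⊆ g.toPFun.ran := by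
  intro y hy
  obtain ⟨z, _, hz⟩ := PTn.mem_ran_mul.1 hy
  exact ⟨z, hz⟩

/-- Base relations hold in the generated congruence. -/
lemma rel_base {m i : ℕ} (a b : PTn n) (ha : i ≤ ptrank a ∧ ptrank a ≤ m)
    (hb : i ≤ ptrank b ∧ ptrank b ≤ m) (hab : i ≤ ptrank (a * b) ∧ ptrank (a * b) ≤ m) :
    conGen (PTRel n m i)
      (FreeSemigroup.of (⟨a, ha⟩ : PTX n m i) * FreeSemigroup.of (⟨b, hb⟩ : PTX n m i))
      (FreeSemigroup.of (⟨a * b, hab⟩ : PTX n m i)) :=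
  ConGen.Rel.of _ _ ⟨a, b, ha, hb, hab, rfl, rfl⟩

/-- Counting lemma: `rank γ + rank δ ≤ n + rank (γδ)`. -/
lemma ptrank_add_ptrank_le (γ δ : PTn n) :
    ptrank γ + ptrank δ ≤ n + ptrank (γ * δ) := by
  classical
  set D := γ.toPFun.ran with hD
  set S := (γ * δ).toPFun.ran with hS
  have hSsub : S ⊆ δ.toPFun.ran := PTn.ran_mul_subset γ δ
  -- pick preimages for points of ran δ \ S; they lie outside D
  have hkey : ∀ y : Fin n, ∃ x : Fin n, y ∈ δ.toPFun.ran \ S → (y ∈ δ.toPFun x ∧ x ∉ D) := by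
    intro y
    by_cases hy : y ∈ δ.toPFun.ran \ S
    · obtain ⟨x, hx⟩ := hy.1
      refine ⟨x, fun _ => ⟨hx, fun hxD => hy.2 ?_⟩⟩
      exact PTn.mem_ran_mul.2 ⟨x, hxD, hx⟩
    · exact ⟨y, fun h => absurd h hy⟩
  choose f hf using hkey
  have hinj : Set.InjOn f (δ.toPFun.ran \ S) := by
    intro y hy y' hy' hee
    have h1 := (hf y hy).1
    have h2 := (hf y' hy').1
    rw [hee] at h1
    exact Part.mem_unique h1 h2
  have hmaps : ∀ y ∈ δ.toPFun.ran \ S, f y ∈ Dᶜ := fun y hy => (hf y hy).2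
  have hle : (δ.toPFun.ran \ S).ncard ≤ Dᶜ.ncard :=
    Set.ncard_le_ncard_of_injOn f hmaps hinj (Set.toFinite _)
  have hdiff : (δ.toPFun.ran \ S).ncard = ptrank δ - ptrank (γ * δ) := by
    rw [Set.ncard_diff hSsub]; rfl
  have hcompl : D.ncard + Dᶜ.ncard = n := by
    rw [Set.ncard_add_ncard_compl]; simp [Nat.card_eq_fintype_card]
  have hrle : ptrank (γ * δ) ≤ ptrank δ := ptrank_mul_le γ δ
  have hDn : D.ncard = ptrank γ := rfl
  omega

open Classical in
/-- A total function extracted from a partial one. -/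
noncomputable def tfn (θ : PTn n) : Fin n → Fin n :=
  fun x => if h : (θ.toPFun x).Dom then (θ.toPFun x).get h else x

lemma tfn_mem {θ : PTn n} {x : Fin n} (h : (θ.toPFun x).Dom) : tfn θ x ∈ θ.toPFun x := by
  rw [tfn, dif_pos h]; exact Part.get_mem h

end Helpers

section Steps

open Set Part FreeSemigroup

variable {n m r : ℕ}

/-- Step L: replace `(g, θ)` by `(a, θ)` where `a = g·σ` has rank exactly `r+1`,
inserting a "section-of-θ" map `σ` with `σθ = θ`. -/
lemma step_L (g θ : PTn n)
    (hg1 : r + 1 ≤ ptrank g) (hg2 : ptrank g ≤ m)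
    (hθ1 : r + 1 ≤ ptrank θ) (hθ2 : ptrank θ < m)
    (hgθ : ptrank (g * θ) = r) :
    ∃ a : PTX n m (r + 1), ptrank a.val = r + 1 ∧ a.val * θ = g * θ ∧
      conGen (PTRel n m (r + 1))
        (FreeSemigroup.of (⟨g, hg1, hg2⟩ : PTX n m (r + 1)) *
          FreeSemigroup.of (⟨θ, hθ1, hθ2.le⟩ : PTX n m (r + 1)))
        (FreeSemigroup.of a *
          FreeSemigroup.of (⟨θ, hθ1, hθ2.le⟩ : PTX n m (r + 1))) := by
  classical
  set D := g.toPFun.ran with hD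
  set S := (g * θ).toPFun.ran with hSdef
  have hSsub : S ⊆ θ.toPFun.ran := PTn.ran_mul_subset g θ
  have hScard : S.ncard = r := hgθ
  -- find the special point w
  have hwex : ∃ w ∈ D, ∀ y ∈ θ.toPFun w, ∃ u ∈ D, u ≠ w ∧ y ∈ θ.toPFun u := by
    by_cases hsub : ∀ x ∈ D, (θ.toPFun x).Dom
    · have hmaps : ∀ x ∈ D, tfn θ x ∈ S :=
        fun x hx => PTn.mem_ran_mul.2 ⟨x, hx, tfn_mem (hsub x hx)⟩
      have hc : S.ncard < D.ncard := by
        rw [hScard]; exact lt_of_lt_of_le (Nat.lt_succ_self r) hg1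
      obtain ⟨u, hu, w, hw, hne, heq⟩ :=
        Set.exists_ne_map_eq_of_ncard_lt_of_maps_to hc hmaps (Set.toFinite _)
      refine ⟨w, hw, fun y hy => ⟨u, hu, hne, ?_⟩⟩
      have h1 : y = tfn θ w := Part.mem_unique hy (tfn_mem (hsub w hw))
      rw [h1, ← heq]
      exact tfn_mem (hsub u hu)
    · push_neg at hsub
      obtain ⟨w, hw, hdom⟩ := hsub
      refine ⟨w, hw, fun y hy => absurd (Part.dom_iff_mem.2 ⟨y, hy⟩) hdom⟩
  obtain ⟨w, hwD, hw⟩ := hwex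
  -- the section s avoiding w
  have hsec : ∀ y : Fin n, ∃ x : Fin n, y ∈ θ.toPFun.ran → (x ≠ w ∧ y ∈ θ.toPFun x) := by
    intro y
    by_cases hy : y ∈ θ.toPFun.ran
    · obtain ⟨x, hx⟩ := hy
      by_cases hxw : x = w
      · subst hxw
        obtain ⟨u, _, hne, hmem⟩ := hw y hx
        exact ⟨u, fun _ => ⟨hne, hmem⟩⟩
      · exact ⟨x, fun _ => ⟨hxw, hx⟩⟩
    · exact ⟨w, fun h => absurd h hy⟩
  choose s hs using hsec
  -- define σ
  set σ : PTn n :=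
    (fun x => if x = w then Part.some w else (θ.toPFun x).map s : PFun (Fin n) (Fin n))
    with hσdef
  have hσw : σ.toPFun w = Part.some w := if_pos rfl
  have hσx : ∀ x : Fin n, x ≠ w → σ.toPFun x = (θ.toPFun x).map s :=
    fun x hx => if_neg hx
  -- σ * θ = θ
  have hσθ : σ * θ = θ := by
    funext x
    show (σ * θ).toPFun x = θ.toPFun x
    rw [PTn.mul_apply]
    apply Part.ext
    intro y
    refine Iff.trans Part.mem_bind_iff ?_
    by_cases hxw : x = w
    · rw [hxw, hσw]
      constructor
      · rintro ⟨z, hz, hy⟩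
        rw [Part.mem_some_iff] at hz; subst hz; exact hy
      · intro hy; exact ⟨w, Part.mem_some_iff.2 rfl, hy⟩
    · rw [hσx x hxw]
      constructor
      · rintro ⟨z, hz, hy⟩
        obtain ⟨t, ht, hst⟩ := (Part.mem_map_iff _).1 hz
        have htran : t ∈ θ.toPFun.ran := ⟨x, ht⟩
        have h2 := (hs t htran).2
        rw [hst] at h2
        have : y = t := Part.mem_unique hy h2
        rwa [this]
      · intro hy
        have hyran : y ∈ θ.toPFun.ran := ⟨x, hy⟩
        exact ⟨s y, (Part.mem_map_iff _).2 ⟨y, hy, rfl⟩, (hs y hyran).2⟩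
  -- images
  have hsinj : Set.InjOn s θ.toPFun.ran := by
    intro t ht t' ht' hee
    have h1 := (hs t ht).2
    have h2 := (hs t' ht').2
    rw [hee] at h1
    exact Part.mem_unique h1 h2
  have hwnot : w ∉ s '' θ.toPFun.ran := by
    rintro ⟨t, ht, hst⟩
    exact (hs t ht).1 hst
  have hranσ : σ.toPFun.ran ⊆ insert w (s '' θ.toPFun.ran) := by
    rintro y ⟨x, hx⟩
    by_cases hxw : x = w
    · rw [hxw, hσw, Part.mem_some_iff] at hx; rw [hx]; exact Set.mem_insert _ _
    · rw [hσx x hxw] at hx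
      obtain ⟨t, ht, hst⟩ := (Part.mem_map_iff _).1 hx
      exact Set.mem_insert_of_mem _ ⟨t, ⟨x, ht⟩, hst⟩
  have hgσran : (g * σ).toPFun.ran = insert w (s '' S) := by
    apply Set.eq_of_subset_of_subset
    · intro y hy
      obtain ⟨z, hzD, hzy⟩ := PTn.mem_ran_mul.1 hy
      by_cases hzw : z = w
      · rw [hzw, hσw, Part.mem_some_iff] at hzy; rw [hzy]; exact Set.mem_insert _ _
      · rw [hσx z hzw] at hzy
        obtain ⟨t, ht, hst⟩ := (Part.mem_map_iff _).1 hzy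
        exact Set.mem_insert_of_mem _ ⟨t, PTn.mem_ran_mul.2 ⟨z, hzD, ht⟩, hst⟩
    · intro y hy
      rcases Set.mem_insert_iff.1 hy with hyw | ⟨t, htS, hst⟩
      · refine PTn.mem_ran_mul.2 ⟨w, hwD, ?_⟩
        rw [hσw, Part.mem_some_iff]; exact hyw
      · obtain ⟨z, hzD, hzt⟩ := PTn.mem_ran_mul.1 htS
        by_cases hzw : z = w
        · obtain ⟨u, huD, hune, hut⟩ := hw t (hzw ▸ hzt)
          refine PTn.mem_ran_mul.2 ⟨u, huD, ?_⟩
          rw [hσx u hune]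
          exact hst ▸ (Part.mem_map_iff _).2 ⟨t, hut, rfl⟩
        · refine PTn.mem_ran_mul.2 ⟨z, hzD, ?_⟩
          rw [hσx z hzw]
          exact hst ▸ (Part.mem_map_iff _).2 ⟨t, hzt, rfl⟩
  have hgσrank : ptrank (g * σ) = r + 1 := by
    show (g * σ).toPFun.ran.ncard = r + 1
    rw [hgσran]
    rw [Set.ncard_insert_of_notMem (fun hmem => hwnot (Set.image_mono hSsub hmem))
      (Set.toFinite _)]
    rw [Set.ncard_image_of_injOn (hsinj.mono hSsub), hScard]
  have hσrank_le : ptrank σ ≤ m := by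
    have h1 : ptrank σ ≤ (insert w (s '' θ.toPFun.ran)).ncard :=
      Set.ncard_le_ncard hranσ (Set.toFinite _)
    have h2 : (insert w (s '' θ.toPFun.ran)).ncard ≤ (s '' θ.toPFun.ran).ncard + 1 :=
      Set.ncard_insert_le _ _
    have h3 : (s '' θ.toPFun.ran).ncard ≤ ptrank θ :=
      Set.ncard_image_le (Set.toFinite _)
    omega
  have hσrank_ge : r + 1 ≤ ptrank σ := hgσrank ▸ ptrank_mul_le g σ
  have haθ : (g * σ) * θ = g * θ := by rw [mul_assoc, hσθ]
  have hrm : r + 1 ≤ m := le_trans hθ1 hθ2.le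
  refine ⟨⟨g * σ, by omega, by omega⟩, hgσrank, haθ, ?_⟩
  -- the congruence chain
  set R := PTRel n m (r + 1)
  set gX : PTX n m (r + 1) := ⟨g, hg1, hg2⟩
  set tX : PTX n m (r + 1) := ⟨θ, hθ1, hθ2.le⟩
  set sX : PTX n m (r + 1) := ⟨σ, hσrank_ge, hσrank_le⟩
  have c1 : conGen R (FreeSemigroup.of sX * FreeSemigroup.of tX) (FreeSemigroup.of tX) := by
    have h := rel_base (m := m) (i := r + 1) σ θ ⟨hσrank_ge, hσrank_le⟩ ⟨hθ1, hθ2.le⟩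
      ⟨by rw [hσθ]; exact hθ1, by rw [hσθ]; exact hθ2.le⟩
    rwa [show (⟨σ * θ, _⟩ : PTX n m (r + 1)) = tX from Subtype.ext hσθ] at h
  have c2 : conGen R (FreeSemigroup.of gX * FreeSemigroup.of sX)
      (FreeSemigroup.of (⟨g * σ, by omega, by omega⟩ : PTX n m (r + 1))) :=
    rel_base (m := m) (i := r + 1) g σ ⟨hg1, hg2⟩ ⟨hσrank_ge, hσrank_le⟩ ⟨by omega, by omega⟩
  have h1 : conGen R (FreeSemigroup.of gX * FreeSemigroup.of tX)
      (FreeSemigroup.of gX * (FreeSemigroup.of sX * FreeSemigroup.of tX)) :=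
    (conGen R).mul ((conGen R).refl _) ((conGen R).symm c1)
  have h2 : conGen R ((FreeSemigroup.of gX * FreeSemigroup.of sX) * FreeSemigroup.of tX)
      (FreeSemigroup.of (⟨g * σ, by omega, by omega⟩ : PTX n m (r + 1)) *
        FreeSemigroup.of tX) :=
    (conGen R).mul c2 ((conGen R).refl _)
  rw [mul_assoc] at h2
  exact (conGen R).trans h1 h2

/-- Step ι: replace `(g, h)` by `(g, b)` where `b = ι·h` has rank exactly `r+1`,
inserting a partial identity `ι` with `g·ι = g`. -/
lemma step_iota (g h : PTn n)
    (hg1 : r + 1 ≤ ptrank g) (hg2 : ptrank g < m)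
    (hh1 : r + 1 ≤ ptrank h) (hh2 : ptrank h ≤ m)
    (hgh : ptrank (g * h) = r) :
    ∃ b : PTX n m (r + 1), ptrank b.val = r + 1 ∧ g * b.val = g * h ∧
      conGen (PTRel n m (r + 1))
        (FreeSemigroup.of (⟨g, hg1, hg2.le⟩ : PTX n m (r + 1)) *
          FreeSemigroup.of (⟨h, hh1, hh2⟩ : PTX n m (r + 1)))
        (FreeSemigroup.of (⟨g, hg1, hg2.le⟩ : PTX n m (r + 1)) *
          FreeSemigroup.of b) := by
  classical
  set D := g.toPFun.ran with hD
  set S := (g * h).toPFun.ran with hSdef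
  have hSsub : S ⊆ h.toPFun.ran := PTn.ran_mul_subset g h
  have hScard : S.ncard = r := hgh
  -- find t ∈ ran h \ S and its preimage c
  have hne : ¬ (h.toPFun.ran ⊆ S) := by
    intro hsub
    have := Set.ncard_le_ncard hsub (Set.toFinite _)
    have : ptrank h ≤ r := by rw [← hScard]; exact this
    omega
  obtain ⟨t, htran, htS⟩ := Set.not_subset.1 hne
  obtain ⟨c, hc⟩ := htran
  have hcD : c ∉ D := fun hcD => htS (PTn.mem_ran_mul.2 ⟨c, hcD, hc⟩)
  -- define ι : partial identity on insert c D
  set ι : PTn n :=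
    (fun z => Part.assert (z ∈ insert c D) fun _ => Part.some z : PFun (Fin n) (Fin n))
    with hιdef
  have hιmem : ∀ z y : Fin n, y ∈ ι.toPFun z ↔ z ∈ insert c D ∧ y = z := by
    intro z y
    show y ∈ Part.assert _ _ ↔ _
    rw [Part.mem_assert_iff]
    simp [Part.mem_some_iff]
  have hgι : g * ι = g := by
    funext x
    show (g * ι).toPFun x = g.toPFun x
    rw [PTn.mul_apply]
    apply Part.ext
    intro y
    refine Iff.trans Part.mem_bind_iff ?_
    constructor
    · rintro ⟨z, hz, hy⟩
      obtain ⟨_, hy⟩ := (hιmem z y).1 hy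
      subst hy; exact hz
    · intro hy
      exact ⟨y, hy, (hιmem y y).2 ⟨Set.mem_insert_of_mem _ ⟨x, hy⟩, rfl⟩⟩
  have hιran : ι.toPFun.ran = insert c D := by
    apply Set.eq_of_subset_of_subset
    · rintro y ⟨z, hz⟩
      obtain ⟨hzin, hy⟩ := (hιmem z y).1 hz
      subst hy; exact hzin
    · intro z hz
      exact ⟨z, (hιmem z z).2 ⟨hz, rfl⟩⟩
  have hιrank : ptrank ι = ptrank g + 1 := by
    show ι.toPFun.ran.ncard = D.ncard + 1
    rw [hιran, Set.ncard_insert_of_notMem hcD (Set.toFinite _)]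
  have hbran : (ι * h).toPFun.ran = insert t S := by
    apply Set.eq_of_subset_of_subset
    · intro y hy
      obtain ⟨z, hzran, hzy⟩ := PTn.mem_ran_mul.1 hy
      rw [hιran] at hzran
      rcases Set.mem_insert_iff.1 hzran with hzc | hzD
      · subst hzc
        have : y = t := Part.mem_unique hzy hc
        subst this; exact Set.mem_insert _ _
      · exact Set.mem_insert_of_mem _ (PTn.mem_ran_mul.2 ⟨z, hzD, hzy⟩)
    · intro y hy
      rcases Set.mem_insert_iff.1 hy with hyt | hyS
      · subst hyt
        exact PTn.mem_ran_mul.2 ⟨c, hιran ▸ Set.mem_insert _ _, hc⟩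
      · obtain ⟨z, hzD, hzy⟩ := PTn.mem_ran_mul.1 hyS
        exact PTn.mem_ran_mul.2 ⟨z, hιran ▸ Set.mem_insert_of_mem _ hzD, hzy⟩
  have hbrank : ptrank (ι * h) = r + 1 := by
    show (ι * h).toPFun.ran.ncard = r + 1
    rw [hbran, Set.ncard_insert_of_notMem htS (Set.toFinite _), hScard]
  have hgb : g * (ι * h) = g * h := by rw [← mul_assoc, hgι]
  have hrm : r + 1 ≤ m := le_trans hg1 hg2.le
  refine ⟨⟨ι * h, by omega, by omega⟩, hbrank, hgb, ?_⟩
  set R := PTRel n m (r + 1)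
  set gX : PTX n m (r + 1) := ⟨g, hg1, hg2.le⟩
  set hX : PTX n m (r + 1) := ⟨h, hh1, hh2⟩
  set iX : PTX n m (r + 1) := ⟨ι, by omega, by omega⟩
  have c1 : conGen R (FreeSemigroup.of gX * FreeSemigroup.of iX) (FreeSemigroup.of gX) := by
    have hrel := rel_base (m := m) (i := r + 1) g ι ⟨hg1, hg2.le⟩ ⟨by omega, by omega⟩
      ⟨by rw [hgι]; exact hg1, by rw [hgι]; exact hg2.le⟩
    rwa [show (⟨g * ι, _⟩ : PTX n m (r + 1)) = gX from Subtype.ext hgι] at hrel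
  have c2 : conGen R (FreeSemigroup.of iX * FreeSemigroup.of hX)
      (FreeSemigroup.of (⟨ι * h, by omega, by omega⟩ : PTX n m (r + 1))) :=
    rel_base (m := m) (i := r + 1) ι h ⟨by omega, by omega⟩ ⟨hh1, hh2⟩ ⟨by omega, by omega⟩
  have h1 : conGen R (FreeSemigroup.of gX * FreeSemigroup.of hX)
      ((FreeSemigroup.of gX * FreeSemigroup.of iX) * FreeSemigroup.of hX) :=
    (conGen R).mul ((conGen R).symm c1) ((conGen R).refl _)
  have h2 : conGen R (FreeSemigroup.of gX * (FreeSemigroup.of iX * FreeSemigroup.of hX))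
      (FreeSemigroup.of gX *
        FreeSemigroup.of (⟨ι * h, by omega, by omega⟩ : PTX n m (r + 1))) :=
    (conGen R).mul ((conGen R).refl _) c2
  rw [← mul_assoc] at h2
  exact (conGen R).trans h1 h2

end Steps

/-- In the partial transformation monoid, if `r + 1 ≤ rank γ, rank δ ≤ m` and
`rank (γδ) = r`, then there are `α, β` of rank `r + 1` with `αβ = γδ` such that
`x_γ x_δ = x_α x_β` is a consequence of the Cayley relations among elements of rank
between `r + 1` and `m` (assuming `m < n` and `r + n + 1 ≤ 2m`). -/
theorem stmt_18 (n m r : ℕ) (hm : m < n) (hr : r + n + 1 ≤ 2 * m)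
    (γ δ : PTn n)
    (hγ₁ : r + 1 ≤ ptrank γ) (hγ₂ : ptrank γ ≤ m)
    (hδ₁ : r + 1 ≤ ptrank δ) (hδ₂ : ptrank δ ≤ m)
    (hrank : ptrank (γ * δ) = r) :
    ∃ α β : PTX n m (r + 1), ptrank α.val = r + 1 ∧ ptrank β.val = r + 1 ∧
      α.val * β.val = γ * δ ∧
      conGen (PTRel n m (r + 1))
        (FreeSemigroup.of (⟨γ, ⟨hγ₁, hγ₂⟩⟩ : PTX n m (r + 1)) *
          FreeSemigroup.of (⟨δ, ⟨hδ₁, hδ₂⟩⟩ : PTX n m (r + 1)))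
        (FreeSemigroup.of α * FreeSemigroup.of β) := by
  have hm2 : r + 2 ≤ m := by omega
  by_cases hq : ptrank δ < m
  · -- fix α first, then β
    obtain ⟨α, hαr, hαδ, c1⟩ := step_L γ δ hγ₁ hγ₂ hδ₁ hq hrank
    have hαδr : ptrank (α.val * δ) = r := by rw [hαδ]; exact hrank
    have hαlt : ptrank α.val < m := by omega
    obtain ⟨β, hβr, hβδ, c2⟩ :=
      step_iota α.val δ (le_of_eq hαr.symm) hαlt hδ₁ hδ₂ hαδr
    refine ⟨α, β, hαr, hβr, by rw [hβδ, hαδ], ?_⟩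
    exact (conGen (PTRel n m (r + 1))).trans c1 c2
  · -- rank δ = m, so rank γ < m by counting; fix β first, then α
    have hcount := ptrank_add_ptrank_le γ δ
    have hγlt : ptrank γ < m := by omega
    obtain ⟨β, hβr, hγβ, c1⟩ := step_iota γ δ hγ₁ hγlt hδ₁ hδ₂ hrank
    have hγβr : ptrank (γ * β.val) = r := by rw [hγβ]; exact hrank
    have hβlt : ptrank β.val < m := by omega
    obtain ⟨α, hαr, hαβ, c2⟩ :=
      step_L γ β.val hγ₁ hγ₂ (le_of_eq hβr.symm) hβlt hγβr
    refine ⟨α, β, hαr, hβr, by rw [hαβ, hγβ], ?_⟩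
    exact (conGen (PTRel n m (r + 1))).trans c1 c2
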